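/- For every nonnegative integer n, Σ_{j=0}^{n} q^{-j(n+1)} / (q;q)_j = (-1)^{n+1} q^{(n+2)(n+1)/2} / (q;q)_{n+1} · Σ_{j=-n-1}^{n} (-1)^j q^{-j(3j+1)/2}, as an identity of rational functions in q. -/
import Mathlib

/-- Finite q-Pochhammer symbol `(a;q)_n`. -/
noncomputable def qp (a q : ℂ) (n : ℕ) : ℂ := ∏ k ∈ Finset.range n, (1 - a * q ^ k)

lemma one_sub_pow_ne (q : ℂ) (hq : ‖q‖ < 1) (k : ℕ) : (1 : ℂ) - q ^ (k+1) ≠ 0 := by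
  intro h
  rw [sub_eq_zero] at h
  have : ‖q ^ (k+1)‖ < 1 := by
    rw [norm_pow]
    exact pow_lt_one₀ (norm_nonneg q) hq (Nat.succ_ne_zero k)
  rw [← h] at this
  simp at this

lemma qp_ne (q : ℂ) (hq : ‖q‖ < 1) (j : ℕ) : qp q q j ≠ 0 := by
  unfold qp
  apply Finset.prod_ne_zero_iff.mpr
  intro k _
  have := one_sub_pow_ne q hq k
  rwa [pow_succ'] at this

lemma qp_succ (q : ℂ) (j : ℕ) : qp q q (j+1) = qp q q j * (1 - q ^ (j+1)) := by
  unfold qp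
  rw [Finset.prod_range_succ, pow_succ']

noncomputable def Fq (q : ℂ) (m : ℕ) (x : ℂ) : ℂ := ∑ j ∈ Finset.range m, x ^ j / qp q q j

lemma Fq_top (q : ℂ) (m : ℕ) (x : ℂ) : Fq q (m+1) x = Fq q m x + x ^ m / qp q q m := by
  unfold Fq; rw [Finset.sum_range_succ]

lemma Fq_shift (q : ℂ) (hq : ‖q‖ < 1) (m : ℕ) (x : ℂ) :
    Fq q (m+1) x = Fq q (m+1) (q*x) + x * Fq q m x := by
  unfold Fq
  rw [Finset.sum_range_succ' (fun j => x ^ j / qp q q j),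
      Finset.sum_range_succ' (fun j => (q*x) ^ j / qp q q j), Finset.mul_sum]
  have key : ∀ j, x ^ (j+1) / qp q q (j+1)
      = (q*x) ^ (j+1) / qp q q (j+1) + x * (x ^ j / qp q q j) := by
    intro j
    rw [qp_succ]
    have h1 := qp_ne q hq j
    have h2 := one_sub_pow_ne q hq j
    field_simp
    ring
  rw [Finset.sum_congr rfl (fun j _ => key j), Finset.sum_add_distrib]
  ring

lemma A_rec (q : ℂ) (hq : ‖q‖ < 1) (hq0 : q ≠ 0) (n : ℕ) :
    (1 - q ^ (-((n:ℤ)+2))) * Fq q (n+2) (q ^ (-((n:ℤ)+2)))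
      = Fq q (n+1) (q ^ (-((n:ℤ)+1)))
        + (q ^ (-((n:ℤ)+1)^2) - q ^ (-((n:ℤ)+2)^2)) / qp q q (n+1) := by
  set x : ℂ := q ^ (-((n:ℤ)+2)) with hx
  have hqx : q * x = q ^ (-((n:ℤ)+1)) := by
    rw [hx, show (-((n:ℤ)+1)) = 1 + (-((n:ℤ)+2)) by ring, zpow_add₀ hq0, zpow_one]
  have h1 := Fq_shift q hq (n+1) x
  have h2 := Fq_top q (n+1) (q*x)
  have h3 := Fq_top q (n+1) x
  rw [hqx] at h2
  have hp1 : (q ^ (-((n:ℤ)+1))) ^ (n+1) = q ^ (-((n:ℤ)+1)^2) := by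
    rw [← zpow_natCast (q ^ (-((n:ℤ)+1))) (n+1), ← zpow_mul]
    congr 1; push_cast; ring
  have hp2 : x * x ^ (n+1) = q ^ (-((n:ℤ)+2)^2) := by
    rw [hx, ← zpow_natCast (q ^ (-((n:ℤ)+2))) (n+1), ← zpow_mul, ← zpow_add₀ hq0]
    congr 1; push_cast; ring
  rw [hqx] at h1
  linear_combination h1 + h2 - x * h3 + hp1 / qp q q (n+1) - hp2 / qp q q (n+1)

lemma alg (P S u y g d A B w1 w2 : ℂ) (hP : P ≠ 0) (hd : 1 - d ≠ 0)
    (hyd : y * d = 1) (hu : u = 1 ∨ u = -1) (hA : g * w1 = A) (hB : g * w2 = B) :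
    u * g / P * S + (A - B) / P
      = (1 - y) * (-u * (g * d) / (P * (1 - d)) * (-u * w2 + (u * w1 + S))) := by
  have hd0 : d ≠ 0 := by
    intro h; rw [h, mul_zero] at hyd; exact zero_ne_one hyd
  have hy' : y = d⁻¹ := eq_inv_of_mul_eq_one_left hyd
  rcases hu with h | h <;> subst h <;> rw [hy'] <;> rw [← hA, ← hB] <;>
    field_simp <;> ring

/-- `Σ_{j=0}^n q^{-j(n+1)}/(q;q)_j
      = (-1)^{n+1} q^{(n+2)(n+1)/2}/(q;q)_{n+1} · Σ_{j=-n-1}^n (-1)^j q^{-j(3j+1)/2}`,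
    as an identity of rational functions (stated for all `q` with `0 < |q| < 1`). -/
theorem stmt9 (n : ℕ) (q : ℂ) (hq : ‖q‖ < 1) (hq0 : q ≠ 0) :
    ∑ j ∈ Finset.range (n + 1), q ^ (-((j : ℤ) * (n + 1))) / qp q q j =
      (-1 : ℂ) ^ (n + 1) * q ^ ((n + 2) * (n + 1) / 2) / qp q q (n + 1) *
        ∑ j ∈ Finset.Icc (-(n : ℤ) - 1) (n : ℤ),
          (-1 : ℂ) ^ j * q ^ (-(j * (3 * j + 1) / 2)) := by
  have hlhs : ∀ m : ℕ, (∑ j ∈ Finset.range (m + 1), q ^ (-((j : ℤ) * (m + 1))) / qp q q j)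
      = Fq q (m+1) (q ^ (-((m:ℤ)+1))) := by
    intro m
    unfold Fq
    refine Finset.sum_congr rfl fun j _ => ?_
    congr 1
    rw [← zpow_natCast (q ^ (-((m:ℤ)+1))) j, ← zpow_mul]
    congr 1
    push_cast
    ring
  induction n with
  | zero =>
      rw [hlhs 0]
      have hIcc : Finset.Icc (-((0:ℕ):ℤ) - 1) ((0:ℕ):ℤ) = {-1, 0} := by
        ext j
        simp only [Finset.mem_Icc, Finset.mem_insert, Finset.mem_singleton]
        push_cast
        omega
      rw [hIcc]
      have h1q : (1:ℂ) - q ≠ 0 := by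
        have := one_sub_pow_ne q hq 0; rwa [pow_one] at this
      have hqp1 : qp q q (0+1) = 1 - q := by
        unfold qp; simp
      have hF : Fq q (0+1) (q ^ (-(((0:ℕ):ℤ)+1))) = 1 := by
        unfold Fq qp; simp
      rw [hF, hqp1]
      rw [Finset.sum_insert (by decide), Finset.sum_singleton]
      norm_num
      field_simp
      ring
  | succ n ih =>
      rw [hlhs (n+1)]
      have hcast : (((n+1:ℕ):ℤ)+1) = ((n:ℤ)+2) := by push_cast; ring
      rw [show (q ^ (-(((n+1:ℕ):ℤ)+1))) = q ^ (-((n:ℤ)+2)) by rw [hcast]]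
      -- nonvanishing facts
      have hP : qp q q (n+1) ≠ 0 := qp_ne q hq (n+1)
      have hd : (1:ℂ) - q ^ (n+1+1) ≠ 0 := one_sub_pow_ne q hq (n+1)
      have hyd : q ^ (-((n:ℤ)+2)) * q ^ (n+1+1) = 1 := by
        rw [← zpow_natCast q (n+1+1), ← zpow_add₀ hq0]
        rw [show (-((n:ℤ)+2) + ((n+1+1:ℕ):ℤ)) = 0 by push_cast; ring, zpow_zero]
      have hy0 : (1:ℂ) - q ^ (-((n:ℤ)+2)) ≠ 0 := by
        intro h
        rw [sub_eq_zero] at h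
        have : (1:ℂ) - q ^ (n+1+1) = 0 := by
          rw [sub_eq_zero, ← hyd, ← h, one_mul]
        exact hd this
      -- divisibility witnesses
      obtain ⟨r, hr⟩ := Nat.even_mul_succ_self (n+1+1)
      have hk2 : (n+1+2)*(n+1+1) = 2*r := by
        rw [Nat.mul_comm, show n+1+1+1 = n+1+2 from rfl] at hr
        omega
      obtain ⟨k, hk⟩ : ∃ k, (n+2)*(n+1) = 2*k := by
        obtain ⟨s, hs⟩ := Nat.even_mul_succ_self (n+1)
        exact ⟨s, by rw [Nat.mul_comm, show n+1+1 = n+2 from rfl] at hs; omega⟩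
      obtain ⟨m1, hm1⟩ : ∃ m : ℤ, ((n:ℤ)+1)*(3*((n:ℤ)+1)+1) = 2*m := by
        rcases Int.even_or_odd ((n:ℤ)+1) with ⟨c,hc⟩ | ⟨c,hc⟩
        · exact ⟨c*(6*c+1), by rw [hc]; ring⟩
        · exact ⟨(2*c+1)*(3*c+2), by rw [hc]; ring⟩
      obtain ⟨m2, hm2⟩ : ∃ m : ℤ, (-(n:ℤ)-2)*(3*(-(n:ℤ)-2)+1) = 2*m := by
        rcases Int.even_or_odd (-(n:ℤ)-2) with ⟨c,hc⟩ | ⟨c,hc⟩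
        · exact ⟨c*(6*c+1), by rw [hc]; ring⟩
        · exact ⟨(2*c+1)*(3*c+2), by rw [hc]; ring⟩
      -- split the Icc sum
      have hsplit : Finset.Icc (-((n+1:ℕ):ℤ) - 1) ((n+1:ℕ):ℤ)
          = insert (-(n:ℤ)-2) (insert ((n:ℤ)+1) (Finset.Icc (-(n:ℤ)-1) (n:ℤ))) := by
        ext j
        simp only [Finset.mem_Icc, Finset.mem_insert]
        push_cast
        omega
      rw [hsplit, Finset.sum_insert (by
            simp only [Finset.mem_insert, Finset.mem_Icc]
            push_cast
            omega),
          Finset.sum_insert (by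
            simp only [Finset.mem_Icc]
            push_cast
            omega)]
      -- simplify the two extra terms
      rw [show ((-1:ℂ)) ^ (-(n:ℤ)-2) = (-1:ℂ)^(n+2) by
        rw [show (-(n:ℤ)-2) = -(((n+2:ℕ)):ℤ) by push_cast; ring, zpow_neg, zpow_natCast,
          ← inv_pow]; norm_num]
      rw [show ((-1:ℂ)) ^ ((n:ℤ)+1) = (-1:ℂ)^(n+1) by
        rw [show ((n:ℤ)+1) = (((n+1:ℕ)):ℤ) by push_cast; ring, zpow_natCast]]
      rw [show (-((-(n:ℤ)-2) * (3*(-(n:ℤ)-2)+1) / 2)) = -m2 by rw [hm2]; omega]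
      rw [show (-(((n:ℤ)+1) * (3*((n:ℤ)+1)+1) / 2)) = -m1 by rw [hm1]; omega]
      -- exponent of the prefactor
      rw [show (n+1+2)*(n+1+1)/2 = (n+2)*(n+1)/2 + (n+1+1) by
        have hlink : (n+1+2)*(n+1+1) = (n+2)*(n+1) + 2*(n+2) := by ring
        omega]
      rw [pow_add q ((n+2)*(n+1)/2) (n+1+1)]
      rw [qp_succ q (n+1)]
      -- key power identities
      have hA : q ^ ((n+2)*(n+1)/2) * q ^ (-m1) = q ^ (-((n:ℤ)+1)^2) := by
        rw [show (n+2)*(n+1)/2 = k by omega, ← zpow_natCast q k, ← zpow_add₀ hq0]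
        congr 1
        have hkz : ((n:ℤ)+2)*((n:ℤ)+1) = 2*(k:ℤ) := by exact_mod_cast hk
        have h2 : 2*((k:ℤ) + -m1) = 2*(-((n:ℤ)+1)^2) := by linear_combination hm1 - hkz
        exact mul_left_cancel₀ two_ne_zero h2
      have hB : q ^ ((n+2)*(n+1)/2) * q ^ (-m2) = q ^ (-((n:ℤ)+2)^2) := by
        rw [show (n+2)*(n+1)/2 = k by omega, ← zpow_natCast q k, ← zpow_add₀ hq0]
        congr 1
        have hkz : ((n:ℤ)+2)*((n:ℤ)+1) = 2*(k:ℤ) := by exact_mod_cast hk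
        have h2 : 2*((k:ℤ) + -m2) = 2*(-((n:ℤ)+2)^2) := by linear_combination hm2 - hkz
        exact mul_left_cancel₀ two_ne_zero h2
      have hu : ((-1:ℂ))^(n+1) = 1 ∨ ((-1:ℂ))^(n+1) = -1 := by
        rcases Nat.even_or_odd (n+1) with h | h
        · exact Or.inl (Even.neg_one_pow h)
        · exact Or.inr (Odd.neg_one_pow h)
      -- now use the recurrence
      apply mul_left_cancel₀ hy0
      rw [A_rec q hq hq0 n]
      rw [hlhs n] at ih
      rw [ih]
      linear_combination alg (qp q q (n+1))
        (∑ j ∈ Finset.Icc (-(n:ℤ)-1) (n:ℤ), (-1:ℂ)^j * q ^ (-(j*(3*j+1)/2)))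
        ((-1:ℂ)^(n+1)) (q ^ (-((n:ℤ)+2))) (q ^ ((n+2)*(n+1)/2)) (q ^ (n+1+1))
        (q ^ (-((n:ℤ)+1)^2)) (q ^ (-((n:ℤ)+2)^2)) (q ^ (-m1)) (q ^ (-m2))
        hP hd hyd hu hA hB
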